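/- arXiv:0902.2311 — 8 statements merged into one kernel-verified Lean document; each statement's English description precedes it below -/
import Mathlib

section
/- Let p>2, N≥1, ε=±1, K>0, and p' = p/(p-1). Then w(r) = K(N(Kp')^{p-2} + ε r^{p'}) solves equation (E_w) with α = -p' on (0,∞) (when ε=-1, on the interval where the formula is differentiable, interpreting |w'|^{p-2}w' appropriately). -/
/-- Equation (E_w): (|w'|^{p-2}w')' + ((N-1)/r)|w'|^{p-2}w' + ε(r w' + α w) = 0. -/
def Ew (p N ε α : ℝ) (w : ℝ → ℝ) (r : ℝ) : Prop :=
  deriv (fun s => |deriv w s| ^ (p - 2) * deriv w s) r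
    + ((N - 1) / r) * (|deriv w r| ^ (p - 2) * deriv w r)
    + ε * (r * deriv w r + α * w r) = 0

/-- For K>0, w(r) = K(N(Kp')^{p-2} + ε r^{p'}) solves equation (E_w) with α = -p'
on (0,∞). -/
theorem stmt6 (p N ε K p' : ℝ) (hp : 2 < p) (hN : 1 ≤ N)
    (hε : ε = 1 ∨ ε = -1) (hK : 0 < K) (hp' : p' = p / (p - 1)) :
    ∀ r ∈ Set.Ioi (0 : ℝ),
      Ew p N ε (-p') (fun s => K * (N * (K * p') ^ (p - 2) + ε * s ^ p')) r := by
  intro r hr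
  have hr0 : (0:ℝ) < r := hr
  have hpm1 : (0:ℝ) < p - 1 := by linarith
  have hp'pos : 0 < p' := by rw [hp']; positivity
  have hKp' : 0 < K * p' := mul_pos hK hp'pos
  have hεabs : |ε| = 1 := by rcases hε with h | h <;> simp [h]
  have hexp : (p' - 1) * (p - 1) = 1 := by
    rw [hp']; field_simp; ring
  set w : ℝ → ℝ := fun s => K * (N * (K * p') ^ (p - 2) + ε * s ^ p') with hw_def
  have hw : ∀ s ∈ Set.Ioi (0:ℝ),
      HasDerivAt w (K * (ε * (p' * s ^ (p' - 1)))) s := by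
    intro s hs
    have h0 : HasDerivAt (fun x : ℝ => x ^ p') (p' * s ^ (p' - 1)) s :=
      Real.hasDerivAt_rpow_const (Or.inl (ne_of_gt hs))
    exact ((h0.const_mul ε).const_add _).const_mul K
  have hderiv : ∀ s ∈ Set.Ioi (0:ℝ), deriv w s = K * (ε * (p' * s ^ (p' - 1))) :=
    fun s hs => (hw s hs).deriv
  have hKp'pow : (K * p') ^ (p - 2) * (K * p') = (K * p') ^ (p - 1) := by
    rw [show p - 1 = p - 2 + 1 by ring, Real.rpow_add hKp', Real.rpow_one]
  have hF : ∀ s ∈ Set.Ioi (0:ℝ),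
      |deriv w s| ^ (p - 2) * deriv w s = ε * (K * p') ^ (p - 1) * s := by
    intro s hs
    have hs0 : (0:ℝ) < s := hs
    rw [hderiv s hs]
    have habs : |K * (ε * (p' * s ^ (p' - 1)))| = K * p' * s ^ (p' - 1) := by
      rw [abs_mul, abs_mul, abs_mul, hεabs, abs_of_pos hK, abs_of_pos hp'pos,
        abs_of_pos (Real.rpow_pos_of_pos hs0 _)]
      ring
    have hsc : s ^ ((p' - 1) * (p - 2)) * s ^ (p' - 1) = s := by
      rw [← Real.rpow_add hs0, show (p' - 1) * (p - 2) + (p' - 1) = (p' - 1) * (p - 1) by ring,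
        hexp, Real.rpow_one]
    rw [habs, Real.mul_rpow (by positivity) (Real.rpow_nonneg hs0.le _),
      ← Real.rpow_mul hs0.le, ← hKp'pow]
    linear_combination ε * ((K * p') ^ (p - 2) * (K * p')) * hsc
  have hFd : deriv (fun s => |deriv w s| ^ (p - 2) * deriv w s) r
      = ε * (K * p') ^ (p - 1) := by
    have heq : (fun s => |deriv w s| ^ (p - 2) * deriv w s)
        =ᶠ[nhds r] (fun s => ε * (K * p') ^ (p - 1) * s) :=
      Filter.eventuallyEq_of_mem (Ioi_mem_nhds hr0) hF
    rw [heq.deriv_eq]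
    simpa using ((hasDerivAt_id r).const_mul (ε * (K * p') ^ (p - 1))).deriv
  show Ew p N ε (-p') w r
  unfold Ew
  rw [hFd, hF r hr, hderiv r hr]
  have hr' : r ^ (p' - 1) = r ^ p' / r := by
    rw [Real.rpow_sub hr0, Real.rpow_one]
  rw [hr', hw_def, ← hKp'pow]
  field_simp
  ring
end

section
/- Let p>2, N=1, ε=±1, K∈ℝ with K≠0, and α = -(p-1)/(p-2). Then w(r) = (K r + ε |α|^{p-1} |K|^p)_+^{(p-1)/(p-2)} solves equation (E_w) on every interval where K r + ε |α|^{p-1}|K|^p > 0. -/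
/-- In dimension N=1 with α = -(p-1)/(p-2) and K ≠ 0,
w(r) = (K r + ε|α|^{p-1}|K|^p)_+^{(p-1)/(p-2)} solves equation (E_w)
wherever K r + ε|α|^{p-1}|K|^p > 0. -/
theorem stmt7 (p ε K α : ℝ) (hp : 2 < p) (hε : ε = 1 ∨ ε = -1)
    (hK : K ≠ 0) (hα : α = -((p - 1) / (p - 2))) :
    ∀ r : ℝ, 0 < r → 0 < K * r + ε * |α| ^ (p - 1) * |K| ^ p →
      Ew p 1 ε α
        (fun s => (max (K * s + ε * |α| ^ (p - 1) * |K| ^ p) 0) ^ ((p - 1) / (p - 2))) r := by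
  intro r hr hpos
  have hp2 : (0:ℝ) < p - 2 := by linarith
  set q : ℝ := (p - 1) / (p - 2) with hqdef
  have hq1 : 1 < q := by rw [hqdef, lt_div_iff₀ hp2]; linarith
  have hq0 : (0:ℝ) < q := by linarith
  have hαq : α = -q := hα
  have habsα : |α| = q := by rw [hαq, abs_neg, abs_of_pos hq0]
  set c : ℝ := ε * |α| ^ (p - 1) * |K| ^ p with hcdef
  have hK0 : (0:ℝ) < |K| := abs_pos.2 hK
  -- eventual positivity
  have hcont : Continuous fun s : ℝ => K * s + c := by continuity
  have hopen : IsOpen {s : ℝ | 0 < K * s + c} := isOpen_lt continuous_const hcont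
  have hev : ∀ᶠ s in nhds r, 0 < K * s + c := hopen.mem_nhds hpos
  -- w = f near r
  have hw : (fun s => (max (K * s + c) 0) ^ q) =ᶠ[nhds r] fun s => (K * s + c) ^ q :=
    hev.mono fun s hs => by simp only [max_eq_left hs.le]
  -- derivative of f
  have hfderiv : ∀ s : ℝ, 0 < K * s + c →
      HasDerivAt (fun u => (K * u + c) ^ q) (q * (K * s + c) ^ (q - 1) * K) s := by
    intro s hs
    have h1 : HasDerivAt (fun x : ℝ => x ^ q) (q * (K * s + c) ^ (q - 1)) (K * s + c) :=
      Real.hasDerivAt_rpow_const (Or.inl hs.ne')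
    have h2 : HasDerivAt (fun u : ℝ => K * u + c) K s := by
      simpa using ((hasDerivAt_id s).const_mul K).add_const c
    exact h1.comp s h2
  have hdw : deriv (fun s => (max (K * s + c) 0) ^ q) =ᶠ[nhds r]
      fun s => q * (K * s + c) ^ (q - 1) * K :=
    hw.deriv.trans (hev.mono fun s hs => (hfderiv s hs).deriv)
  -- the quantity inside the outer derivative
  set C : ℝ := q * q ^ (p - 2) * K * |K| ^ (p - 2) with hCdef
  have hone : (q - 1) * (p - 2) = 1 := by
    rw [hqdef]; field_simp; norm_num
  have htq : ∀ s : ℝ, 0 < K * s + c →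
      (K * s + c) ^ q = (K * s + c) * (K * s + c) ^ (q - 1) := by
    intro s hs
    have h := Real.rpow_add hs 1 (q - 1)
    rw [show (1:ℝ) + (q - 1) = q by ring, Real.rpow_one] at h
    exact h
  have hg : (fun s => |deriv (fun u => (max (K * u + c) 0) ^ q) s| ^ (p - 2)
        * deriv (fun u => (max (K * u + c) 0) ^ q) s)
      =ᶠ[nhds r] fun s => C * (K * s + c) ^ q := by
    filter_upwards [hdw, hev] with s hds hs
    rw [hds]
    have ht1 : (0:ℝ) < (K * s + c) ^ (q - 1) := Real.rpow_pos_of_pos hs _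
    have habs : |q * (K * s + c) ^ (q - 1) * K| = q * (K * s + c) ^ (q - 1) * |K| := by
      rw [abs_mul, abs_mul, abs_of_pos hq0, abs_of_pos ht1]
    rw [habs, Real.mul_rpow (by positivity) (abs_nonneg K), Real.mul_rpow hq0.le ht1.le]
    have h11 : ((K * s + c) ^ (q - 1)) ^ (p - 2) = K * s + c := by
      rw [← Real.rpow_mul hs.le, hone, Real.rpow_one]
    rw [h11, htq s hs, hCdef]
    ring
  -- the outer derivative at r
  have hout : deriv (fun s => |deriv (fun u => (max (K * u + c) 0) ^ q) s| ^ (p - 2)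
        * deriv (fun u => (max (K * u + c) 0) ^ q) s) r
      = C * (q * (K * r + c) ^ (q - 1) * K) := by
    rw [hg.deriv_eq]
    exact (((hfderiv r hpos).const_mul C)).deriv
  -- assemble
  have hdwr : deriv (fun s => (max (K * s + c) 0) ^ q) r
      = q * (K * r + c) ^ (q - 1) * K := hdw.eq_of_nhds
  unfold Ew
  rw [hout, hdwr]
  have hwr : (max (K * r + c) 0) ^ q = (K * r + c) * (K * r + c) ^ (q - 1) := by
    rw [max_eq_left hpos.le, htq r hpos]
  simp only [hwr]
  set D : ℝ := (K * r + c) ^ (q - 1) with hDdef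
  have hε2 : ε * ε = 1 := by rcases hε with h | h <;> rw [h] <;> norm_num
  have hc : c = ε * q ^ (p - 1) * |K| ^ p := by rw [hcdef, habsα]
  have hqq : q * q ^ (p - 2) = q ^ (p - 1) := by
    have h := Real.rpow_add hq0 1 (p - 2)
    rw [show (1:ℝ) + (p - 2) = p - 1 by ring, Real.rpow_one] at h
    exact h.symm
  have hKK : |K| ^ p = K * K * |K| ^ (p - 2) := by
    have h := Real.rpow_add hK0 2 (p - 2)
    rw [show (2:ℝ) + (p - 2) = p by ring] at h
    have h2 : |K| ^ (2:ℝ) = K * K := by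
      rw [show ((2:ℝ)) = ((2:ℕ):ℝ) by norm_num, Real.rpow_natCast, sq_abs, sq]
    rw [h2] at h
    exact h
  rw [hc, hαq, hCdef, hqq]
  have h0 : ((1:ℝ) - 1) / r = 0 := by norm_num
  rw [h0, zero_mul]
  clear_value q c D
  linear_combination (-(q * q ^ (p - 1) * D)) * hKK - (q * q ^ (p - 1) * |K| ^ p * D) * hε2
end

section
/- Let p>2, N≥1, ε=±1, α∈ℝ, and let w be a C^1 solution of equation (E_w) on an interval I⊂(0,∞) with |w'|^{p-2}w' of class C^1. Define J_N(r) = r^N (w(r) + ε r^{-1} |w'(r)|^{p-2} w'(r)). Then J_N'(r) = (N-α) r^{N-1} w(r) on I. -/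
/-- If w solves (E_w) on an open interval I ⊆ (0,∞), then
J_N(r) = r^N(w + ε r⁻¹|w'|^{p-2}w') satisfies J_N'(r) = (N-α) r^{N-1} w(r). -/
theorem stmt8 (p N ε α : ℝ) (hp : 2 < p) (hN : 1 ≤ N) (hε : ε = 1 ∨ ε = -1)
    (I : Set ℝ) (hI : IsOpen I) (hI0 : I ⊆ Set.Ioi 0)
    (w : ℝ → ℝ)
    (hw1 : ∀ r ∈ I, DifferentiableAt ℝ w r)
    (hw2 : ∀ r ∈ I, DifferentiableAt ℝ (fun s => |deriv w s| ^ (p - 2) * deriv w s) r)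
    (heq : ∀ r ∈ I, Ew p N ε α w r) :
    ∀ r ∈ I,
      HasDerivAt (fun s => s ^ N * (w s + ε * s⁻¹ * (|deriv w s| ^ (p - 2) * deriv w s)))
        ((N - α) * r ^ (N - 1) * w r) r := by
  intro r hr
  have hr0 : (0:ℝ) < r := hI0 hr
  have hrne : r ≠ 0 := ne_of_gt hr0
  have hε2 : ε * ε = 1 := by rcases hε with h | h <;> simp [h]
  set v : ℝ → ℝ := fun s => |deriv w s| ^ (p - 2) * deriv w s with hv
  have hwd : HasDerivAt w (deriv w r) r := (hw1 r hr).hasDerivAt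
  have hvd : HasDerivAt v (deriv v r) r := (hw2 r hr).hasDerivAt
  have hpow : HasDerivAt (fun s : ℝ => s ^ N) (N * r ^ (N - 1)) r :=
    Real.hasDerivAt_rpow_const (Or.inl hrne)
  have hinv : HasDerivAt (fun s : ℝ => s⁻¹) (-(r ^ 2)⁻¹) r := hasDerivAt_inv hrne
  have h := hpow.mul (hwd.add (((hasDerivAt_const r ε).mul hinv).mul hvd))
  have he : deriv v r + (N - 1) / r * v r + ε * (r * deriv w r + α * w r) = 0 := heq r hr
  show HasDerivAt (fun s => s ^ N * (w s + ε * s⁻¹ * v s)) ((N - α) * r ^ (N - 1) * w r) r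
  convert h using 1
  iterate 3 rfl
  have rN : r ^ N = r ^ (N - 1) * r := by
    rw [← Real.rpow_add_one hrne, sub_add_cancel]
  have hv' : deriv v r = -((N - 1) / r * v r + ε * (r * deriv w r + α * w r)) := by
    linarith
  rw [rN, hv']
  simp only [Pi.add_apply, Pi.mul_apply]
  field_simp
  linear_combination (α * w r * r + r ^ 2 * deriv w r) * hε2
end

section
/- Let p>2, N≥1, ε=±1, α∈ℝ, and let w solve equation (E_w) on I⊂(0,∞). Define J_α(r) = r^α (w(r) + ε r^{-1}|w'(r)|^{p-2}w'(r)). Then J_α'(r) = -ε(N-α) r^{α-2} |w'(r)|^{p-2} w'(r) on I. -/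
/-- If w solves (E_w) on an open interval I ⊆ (0,∞), then
J_α(r) = r^α(w + ε r⁻¹|w'|^{p-2}w') satisfies
J_α'(r) = -ε(N-α) r^{α-2} |w'|^{p-2} w'. -/
theorem stmt9 (p N ε α : ℝ) (hp : 2 < p) (hN : 1 ≤ N) (hε : ε = 1 ∨ ε = -1)
    (I : Set ℝ) (hI : IsOpen I) (hI0 : I ⊆ Set.Ioi 0)
    (w : ℝ → ℝ)
    (hw1 : ∀ r ∈ I, DifferentiableAt ℝ w r)
    (hw2 : ∀ r ∈ I, DifferentiableAt ℝ (fun s => |deriv w s| ^ (p - 2) * deriv w s) r)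
    (heq : ∀ r ∈ I, Ew p N ε α w r) :
    ∀ r ∈ I,
      HasDerivAt (fun s => s ^ α * (w s + ε * s⁻¹ * (|deriv w s| ^ (p - 2) * deriv w s)))
        (-ε * (N - α) * r ^ (α - 2) * (|deriv w r| ^ (p - 2) * deriv w r)) r := by
  intro r hr
  have hrpos : (0 : ℝ) < r := hI0 hr
  have hrne : r ≠ 0 := ne_of_gt hrpos
  set g : ℝ → ℝ := fun s => |deriv w s| ^ (p - 2) * deriv w s with hg
  have hgd : HasDerivAt g (deriv g r) r := (hw2 r hr).hasDerivAt
  have hwd : HasDerivAt w (deriv w r) r := (hw1 r hr).hasDerivAt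
  have hinv : HasDerivAt (fun s : ℝ => s⁻¹) (-(r ^ 2)⁻¹) r := hasDerivAt_inv hrne
  have hpow : HasDerivAt (fun s : ℝ => s ^ α) (α * r ^ (α - 1)) r :=
    Real.hasDerivAt_rpow_const (Or.inl hrne)
  have h1 : HasDerivAt (fun s => w s + ε * s⁻¹ * g s)
      (deriv w r + (ε * -(r ^ 2)⁻¹ * g r + ε * r⁻¹ * deriv g r)) r :=
    hwd.add ((hinv.const_mul ε).mul hgd)
  have h2 := hpow.mul h1
  convert h2 using 1
  case e'_4 => rfl
  case e'_5 => rfl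
  case e'_8 => rfl
  have hD : deriv g r = -(((N - 1) / r) * g r + ε * (r * deriv w r + α * w r)) := by
    have h := heq r hr
    unfold Ew at h
    have hgr : |deriv w r| ^ (p - 2) * deriv w r = g r := rfl
    have hgd' : deriv (fun s => |deriv w s| ^ (p - 2) * deriv w s) r = deriv g r := rfl
    rw [hgr, hgd'] at h
    linarith
  rw [hD]
  have e1 : r ^ (α - 1) = r ^ α / r := by
    rw [Real.rpow_sub hrpos, Real.rpow_one]
  have e2 : r ^ (α - 2) = r ^ α / r ^ 2 := by
    rw [Real.rpow_sub hrpos, Real.rpow_two]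
  rw [e1, e2]
  rcases hε with h | h <;> subst h <;> field_simp <;> ring
end

section
/- Let p>2, N≥1, ε=1, α≤N with α≠0, and let w be a nontrivial solution of equation (E_w) on an interval I⊂(0,∞). Then w has at most one simple zero in I. More precisely: if ρ₀ < ρ₁ are two consecutive zeros of w with w>0 on (ρ₀,ρ₁) and ρ₀ simple (w'(ρ₀)>0), then one reaches a contradiction with the identity J_N(ρ₁)-J_N(ρ₀) = (N-α)∫_{ρ₀}^{ρ₁} s^{N-1} w ds. -/
/-- For ε=1 and α ≤ N, α ≠ 0, a nontrivial solution of (E_w) has at most one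
simple zero: there cannot be two consecutive zeros ρ₀ < ρ₁ with w > 0 in between
and ρ₀ simple (w'(ρ₀) > 0). -/
theorem stmt14 (p N α : ℝ) (hp : 2 < p) (hN : 1 ≤ N)
    (hα : α ≤ N) (hα0 : α ≠ 0)
    (I : Set ℝ) (hI : IsOpen I) (hconn : I.OrdConnected) (hI0 : I ⊆ Set.Ioi 0)
    (w : ℝ → ℝ) (hne : ∃ r ∈ I, w r ≠ 0)
    (hw1 : ∀ r ∈ I, DifferentiableAt ℝ w r)
    (hw2 : ∀ r ∈ I, DifferentiableAt ℝ (fun s => |deriv w s| ^ (p - 2) * deriv w s) r)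
    (heq : ∀ r ∈ I, Ew p N 1 α w r) :
    ¬ ∃ ρ₀ ρ₁ : ℝ, ρ₀ ∈ I ∧ ρ₁ ∈ I ∧ ρ₀ < ρ₁ ∧ w ρ₀ = 0 ∧ w ρ₁ = 0 ∧
      (∀ r ∈ Set.Ioo ρ₀ ρ₁, 0 < w r) ∧ 0 < deriv w ρ₀ := by
  rintro ⟨ρ₀, ρ₁, h0I, h1I, hlt, hw0, hw1', hpos, hd0⟩
  set φ : ℝ → ℝ := fun s => |deriv w s| ^ (p - 2) * deriv w s with hφdef
  set J : ℝ → ℝ := fun r => r ^ N * w r + r ^ (N - 1) * φ r with hJdef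
  -- derivative of J on I
  have hJder : ∀ r ∈ I, HasDerivAt J ((N - α) * (r ^ (N - 1) * w r)) r := by
    intro r hrI
    have hr0 : (0:ℝ) < r := hI0 hrI
    have h1 : HasDerivAt (fun x : ℝ => x ^ N) (N * r ^ (N - 1)) r :=
      Real.hasDerivAt_rpow_const (Or.inl hr0.ne')
    have h2 : HasDerivAt w (deriv w r) r := (hw1 r hrI).hasDerivAt
    have h3 : HasDerivAt (fun x : ℝ => x ^ (N - 1)) ((N - 1) * r ^ (N - 1 - 1)) r :=
      Real.hasDerivAt_rpow_const (Or.inl hr0.ne')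
    have h4 : HasDerivAt φ (deriv φ r) r := (hw2 r hrI).hasDerivAt
    have hD := (h1.mul h2).add (h3.mul h4)
    have heqr := heq r hrI
    unfold Ew at heqr
    have hφ' : deriv φ r = -((N - 1) / r) * φ r - r * deriv w r - α * w r := by
      have : deriv φ r + ((N - 1) / r) * φ r + 1 * (r * deriv w r + α * w r) = 0 := heqr
      linarith
    have hsub : r ^ (N - 1 - 1) = r ^ (N - 1) / r := by
      rw [Real.rpow_sub hr0, Real.rpow_one]
    have hNsplit : r ^ N = r ^ (N - 1) * r := by
      have h := Real.rpow_add hr0 (N - 1) 1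
      rw [Real.rpow_one] at h
      rw [← h]; norm_num
    have : N * r ^ (N - 1) * w r + r ^ N * deriv w r
        + ((N - 1) * r ^ (N - 1 - 1) * φ r + r ^ (N - 1) * deriv φ r)
        = (N - α) * (r ^ (N - 1) * w r) := by
      rw [hφ', hsub, hNsplit]
      field_simp
      ring
    rwa [this] at hD
  -- Icc ρ₀ ρ₁ ⊆ I
  have hIcc : Set.Icc ρ₀ ρ₁ ⊆ I := hconn.out h0I h1I
  -- J is monotone on Icc
  have hmono : MonotoneOn J (Set.Icc ρ₀ ρ₁) := by
    apply monotoneOn_of_deriv_nonneg (convex_Icc _ _)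
    · exact fun x hx => ((hJder x (hIcc hx)).continuousAt).continuousWithinAt
    · intro x hx
      rw [interior_Icc] at hx
      exact ((hJder x (hIcc ⟨hx.1.le, hx.2.le⟩)).differentiableAt).differentiableWithinAt
    · intro x hx
      rw [interior_Icc] at hx
      have hxI : x ∈ I := hIcc ⟨hx.1.le, hx.2.le⟩
      rw [(hJder x hxI).deriv]
      have hx0 : (0:ℝ) < x := hI0 hxI
      have := hpos x hx
      have h2 := Real.rpow_pos_of_pos hx0 (N - 1)
      exact mul_nonneg (by linarith) (mul_nonneg h2.le (by linarith))
  -- deriv w ρ₁ ≤ 0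
  have hd1 : deriv w ρ₁ ≤ 0 := by
    have hder : HasDerivAt w (deriv w ρ₁) ρ₁ := (hw1 ρ₁ h1I).hasDerivAt
    have htend : Filter.Tendsto (slope w ρ₁) (nhdsWithin ρ₁ (Set.Iio ρ₁)) (nhds (deriv w ρ₁)) :=
      (hasDerivAt_iff_tendsto_slope.1 hder).mono_left
        (nhdsWithin_mono _ (fun x hx => Set.mem_compl_singleton_iff.2 (ne_of_lt hx)))
    refine le_of_tendsto htend ?_
    filter_upwards [Ioo_mem_nhdsLT_of_mem (Set.mem_Ioc.2 ⟨hlt, le_refl _⟩)] with x hx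
    have hwx : 0 < w x := hpos x hx
    rw [slope_def_field, hw1']
    apply div_nonpos_of_nonneg_of_nonpos
    · linarith
    · linarith [hx.2]
  -- J ρ₀ > 0
  have h00 : (0:ℝ) < ρ₀ := hI0 h0I
  have h10 : (0:ℝ) < ρ₁ := hI0 h1I
  have hJ0 : 0 < J ρ₀ := by
    have h1 : (0:ℝ) < ρ₀ ^ (N - 1) := Real.rpow_pos_of_pos h00 _
    have h2 : (0:ℝ) < |deriv w ρ₀| ^ (p - 2) :=
      Real.rpow_pos_of_pos (abs_pos.2 hd0.ne') _
    simp only [hJdef, hφdef, hw0, mul_zero, zero_add]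
    positivity
  have hJ1 : J ρ₁ ≤ 0 := by
    have h1 : (0:ℝ) ≤ ρ₁ ^ (N - 1) := (Real.rpow_pos_of_pos h10 _).le
    have h2 : (0:ℝ) ≤ |deriv w ρ₁| ^ (p - 2) := Real.rpow_nonneg (abs_nonneg _) _
    simp only [hJdef, hφdef, hw1', mul_zero, zero_add]
    exact mul_nonpos_of_nonneg_of_nonpos h1 (mul_nonpos_of_nonneg_of_nonpos h2 hd1)
  have := hmono (Set.left_mem_Icc.2 hlt.le) (Set.right_mem_Icc.2 hlt.le) hlt.le
  linarith
end

section
/- Let p>2, N≥1, ε=1, α>N, and let w be a regular solution of equation (E_w) on [0,∞) with w(0)=a>0 and w'(0)=0. Then w has at least one zero; moreover at a first zero ρ₁, w'(ρ₁)≠0. (Key step: if w>0 on (0,∞) then J_N<0 everywhere, hence w^{-1/(p-1)}w' + r^{1/(p-1)} < 0, so r ↦ r^{p'} + γ w^{(p-2)/(p-1)} is nonincreasing, a contradiction for large r.) -/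
/-- For ε=1 and α > N, a regular solution (w(0) = a > 0, w'(0⁺) = 0) of (E_w)
has at least one zero, and at a first zero ρ₁ the derivative does not vanish. -/
theorem stmt15 (p N α a : ℝ) (hp : 2 < p) (hN : 1 ≤ N) (hα : N < α)
    (w : ℝ → ℝ) (ha : 0 < a)
    (hcont : ContinuousOn w (Set.Ici 0)) (hw0 : w 0 = a)
    (hd0 : Filter.Tendsto (deriv w) (nhdsWithin 0 (Set.Ioi 0)) (nhds 0))
    (hw1 : ∀ r : ℝ, 0 < r → DifferentiableAt ℝ w r)
    (hw2 : ∀ r : ℝ, 0 < r →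
      DifferentiableAt ℝ (fun s => |deriv w s| ^ (p - 2) * deriv w s) r)
    (heq : ∀ r : ℝ, 0 < r → Ew p N 1 α w r) :
    (∃ r : ℝ, 0 < r ∧ w r = 0) ∧
    ∀ ρ₁ : ℝ, 0 < ρ₁ → w ρ₁ = 0 → (∀ r ∈ Set.Ico (0:ℝ) ρ₁, 0 < w r) →
      deriv w ρ₁ ≠ 0 := by
  have hp2 : (0:ℝ) < p - 2 := by linarith
  have hp1 : (0:ℝ) < p - 1 := by linarith
  -- derivative of J_N
  have hJd : ∀ r : ℝ, 0 < r →
      HasDerivAt (fun x : ℝ => x ^ (N - 1) * (|deriv w x| ^ (p - 2) * deriv w x) + x ^ N * w x)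
        ((N - α) * r ^ (N - 1) * w r) r := by
    intro r hr
    have hvd : HasDerivAt (fun s => |deriv w s| ^ (p - 2) * deriv w s)
        (deriv (fun s => |deriv w s| ^ (p - 2) * deriv w s) r) r := (hw2 r hr).hasDerivAt
    have hwd : HasDerivAt w (deriv w r) r := (hw1 r hr).hasDerivAt
    have h1 : HasDerivAt (fun x : ℝ => x ^ (N - 1)) ((N - 1) * r ^ (N - 1 - 1)) r :=
      Real.hasDerivAt_rpow_const (Or.inl hr.ne')
    have h2 : HasDerivAt (fun x : ℝ => x ^ N) (N * r ^ (N - 1)) r :=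
      Real.hasDerivAt_rpow_const (Or.inl hr.ne')
    have h3 := (h1.mul hvd).add (h2.mul hwd)
    refine h3.congr_deriv ?_
    have heqr := heq r hr
    unfold Ew at heqr
    have hdv : deriv (fun s => |deriv w s| ^ (p - 2) * deriv w s) r
        = -((N - 1) / r * (|deriv w r| ^ (p - 2) * deriv w r)) - (r * deriv w r + α * w r) := by
      linarith [heqr]
    rw [hdv]
    have hA : r ^ N = r ^ (N - 1) * r := by
      nth_rewrite 1 [show N = (N - 1) + 1 by ring]
      rw [Real.rpow_add_one hr.ne']
    have hB : r ^ (N - 1) = r ^ (N - 1 - 1) * r := by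
      nth_rewrite 1 [show N - 1 = (N - 1 - 1) + 1 by ring]
      rw [Real.rpow_add_one hr.ne']
    rw [hA, hB]
    field_simp
    ring
  -- J tends to 0 at 0+
  have hvlim : Filter.Tendsto (fun s => |deriv w s| ^ (p - 2) * deriv w s)
      (nhdsWithin 0 (Set.Ioi 0)) (nhds 0) := by
    have hc : ContinuousAt (fun y : ℝ => |y| ^ (p - 2) * y) 0 := by
      have h1 : ContinuousAt (fun y : ℝ => |y| ^ (p - 2)) 0 :=
        (Real.continuousAt_rpow_const |0| (p - 2) (Or.inr hp2.le)).comp continuous_abs.continuousAt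
      exact h1.mul continuousAt_id
    have := hc.tendsto.comp hd0
    simpa [Function.comp_def] using this
  have hterm1 : Filter.Tendsto
      (fun r : ℝ => r ^ (N - 1) * (|deriv w r| ^ (p - 2) * deriv w r))
      (nhdsWithin 0 (Set.Ioi 0)) (nhds 0) := by
    apply squeeze_zero_norm' (a := fun r : ℝ => |(|deriv w r| ^ (p - 2) * deriv w r)|)
    · filter_upwards [Ioo_mem_nhdsGT_of_mem (Set.mem_Ico.mpr ⟨le_refl (0:ℝ), one_pos⟩)] with r hr
      have h1 : r ^ (N - 1) ≤ 1 := Real.rpow_le_one hr.1.le hr.2.le (by linarith)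
      have h2 : (0:ℝ) ≤ r ^ (N - 1) := Real.rpow_nonneg hr.1.le _
      rw [Real.norm_eq_abs, abs_mul, abs_of_nonneg h2]
      nlinarith [abs_nonneg (|deriv w r| ^ (p - 2) * deriv w r)]
    · simpa using hvlim.abs
  have hwlim : Filter.Tendsto w (nhdsWithin 0 (Set.Ioi 0)) (nhds a) := by
    have h := (hcont 0 Set.self_mem_Ici).tendsto
    rw [hw0] at h
    exact h.mono_left (nhdsWithin_mono 0 Set.Ioi_subset_Ici_self)
  have hterm2 : Filter.Tendsto (fun r : ℝ => r ^ N * w r)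
      (nhdsWithin 0 (Set.Ioi 0)) (nhds 0) := by
    have hrN : Filter.Tendsto (fun r : ℝ => r ^ N) (nhdsWithin 0 (Set.Ioi 0)) (nhds 0) := by
      have hc := Real.continuousAt_rpow_const 0 N (Or.inr (by linarith))
      have h2 : Filter.Tendsto (fun r : ℝ => r ^ N) (nhdsWithin 0 (Set.Ioi 0))
          (nhds ((0:ℝ) ^ N)) := hc.tendsto.mono_left nhdsWithin_le_nhds
      simpa [Real.zero_rpow (show N ≠ 0 by positivity)] using h2
    simpa using hrN.mul hwlim
  have hJ0 : Filter.Tendsto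
      (fun x : ℝ => x ^ (N - 1) * (|deriv w x| ^ (p - 2) * deriv w x) + x ^ N * w x)
      (nhdsWithin 0 (Set.Ioi 0)) (nhds 0) := by
    simpa using hterm1.add hterm2
  -- key lemma: if w > 0 on (0,b) then J(b) < 0
  have key : ∀ b : ℝ, 0 < b → (∀ r : ℝ, 0 < r → r < b → 0 < w r) →
      b ^ (N - 1) * (|deriv w b| ^ (p - 2) * deriv w b) + b ^ N * w b < 0 := by
    intro b hb hwb
    have hanti : StrictAntiOn
        (fun x : ℝ => x ^ (N - 1) * (|deriv w x| ^ (p - 2) * deriv w x) + x ^ N * w x)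
        (Set.Ioc 0 b) := by
      apply strictAntiOn_of_deriv_neg (convex_Ioc 0 b)
      · intro x hx
        exact ((hJd x hx.1).differentiableAt.continuousAt).continuousWithinAt
      · intro x hx
        rw [interior_Ioc] at hx
        rw [(hJd x hx.1).deriv]
        have hwx := hwb x hx.1 hx.2
        have hxp : (0:ℝ) < x ^ (N - 1) := Real.rpow_pos_of_pos hx.1 _
        have : N - α < 0 := by linarith
        exact mul_neg_of_neg_of_pos (mul_neg_of_neg_of_pos this hxp) hwx
    have hmem : b / 2 ∈ Set.Ioc (0:ℝ) b := ⟨half_pos hb, by linarith⟩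
    have hhalf : (b/2) ^ (N - 1) * (|deriv w (b/2)| ^ (p - 2) * deriv w (b/2))
        + (b/2) ^ N * w (b/2) ≤ 0 := by
      refine ge_of_tendsto hJ0 ?_
      filter_upwards [Ioo_mem_nhdsGT_of_mem
        (Set.mem_Ico.mpr ⟨le_refl (0:ℝ), half_pos hb⟩)] with r hr
      exact (hanti ⟨hr.1, by linarith [hr.2]⟩ hmem hr.2).le
    have hlt := hanti hmem (Set.mem_Ioc.mpr ⟨hb, le_refl b⟩) (by linarith)
    calc b ^ (N - 1) * (|deriv w b| ^ (p - 2) * deriv w b) + b ^ N * w b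
        < (b/2) ^ (N - 1) * (|deriv w (b/2)| ^ (p - 2) * deriv w (b/2)) + (b/2) ^ N * w (b/2) :=
          hlt
      _ ≤ 0 := hhalf
  constructor
  · -- existence of a zero
    by_contra hcon
    push_neg at hcon
    have hpos : ∀ r : ℝ, 0 ≤ r → 0 < w r := by
      intro r hr
      rcases eq_or_lt_of_le hr with h | h
      · rw [← h, hw0]; exact ha
      rcases lt_or_ge 0 (w r) with h' | h'
      · exact h'
      have hlt : w r < 0 := lt_of_le_of_ne h' (hcon r h)
      have hsub : Set.Icc (0:ℝ) r ⊆ Set.Ici 0 := Set.Icc_subset_Ici_self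
      have hiv := intermediate_value_Icc' h.le (hcont.mono hsub)
      have h0mem : (0:ℝ) ∈ Set.Icc (w r) (w 0) := ⟨hlt.le, by rw [hw0]; exact ha.le⟩
      obtain ⟨c, hc, hc0⟩ := hiv h0mem
      have hcpos : 0 < c := by
        rcases eq_or_lt_of_le hc.1 with hc' | hc'
        · exfalso; rw [← hc', hw0] at hc0; exact ha.ne' hc0
        · exact hc'
      exact absurd hc0 (hcon c hcpos)
    -- the pointwise inequality  (r w)^{1/(p-1)} < -w'
    have hineq : ∀ r : ℝ, 0 < r → (r * w r) ^ (1/(p-1)) < -(deriv w r) := by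
      intro r hr
      have hkey := key r hr (fun s hs _ => hpos s hs.le)
      have hrn : (0:ℝ) < r ^ (N - 1) := Real.rpow_pos_of_pos hr _
      have hA : r ^ N = r ^ (N - 1) * r := by
        nth_rewrite 1 [show N = (N - 1) + 1 by ring]
        rw [Real.rpow_add_one hr.ne']
      rw [hA] at hkey
      have h1 : |deriv w r| ^ (p - 2) * deriv w r < -(r * w r) := by
        by_contra hcontra
        push_neg at hcontra
        have h0 : (0:ℝ) ≤ r ^ (N - 1) * ((|deriv w r| ^ (p - 2) * deriv w r) + r * w r) :=
          mul_nonneg hrn.le (by linarith)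
        nlinarith [hkey]
      have hrw : 0 < r * w r := mul_pos hr (hpos r hr.le)
      have hw' : deriv w r < 0 := by
        by_contra h; push_neg at h
        have hX : 0 ≤ |deriv w r| ^ (p - 2) * deriv w r :=
          mul_nonneg (Real.rpow_nonneg (abs_nonneg _) _) h
        linarith
      have habs : |deriv w r| = -(deriv w r) := abs_of_neg hw'
      have h2 : r * w r < (-(deriv w r)) ^ (p - 1) := by
        have hx : |deriv w r| ^ (p - 2) * deriv w r = -((-(deriv w r)) ^ (p - 1)) := by
          rw [habs, show p - 1 = (p - 2) + 1 by ring,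
            Real.rpow_add_one (show -(deriv w r) ≠ 0 by linarith)]
          ring
        linarith [h1, hx]
      have h3 := Real.rpow_lt_rpow hrw.le h2 (show (0:ℝ) < 1/(p-1) by positivity)
      rw [← Real.rpow_mul (show (0:ℝ) ≤ -(deriv w r) by linarith), mul_one_div,
        div_self hp1.ne', Real.rpow_one] at h3
      exact h3
    -- g(r) = r^{p'} + γ w^{(p-2)/(p-1)} has negative derivative
    have hgd : ∀ r : ℝ, 0 < r →
        HasDerivAt (fun x : ℝ => x ^ (p/(p-1)) + (p/(p-2)) * w x ^ ((p-2)/(p-1)))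
          (p/(p-1) * r ^ (p/(p-1) - 1)
            + (p/(p-2)) * (deriv w r * ((p-2)/(p-1)) * w r ^ ((p-2)/(p-1) - 1))) r := by
      intro r hr
      exact (Real.hasDerivAt_rpow_const (Or.inl hr.ne')).add
        (((hw1 r hr).hasDerivAt.rpow_const (Or.inl (hpos r hr.le).ne')).const_mul _)
    have hgneg : ∀ r : ℝ, 0 < r →
        deriv (fun x : ℝ => x ^ (p/(p-1)) + (p/(p-2)) * w x ^ ((p-2)/(p-1))) r < 0 := by
      intro r hr
      rw [(hgd r hr).deriv]
      have hwr := hpos r hr.le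
      have e1 : p/(p-1) - 1 = 1/(p-1) := by field_simp; ring
      have e2 : (p-2)/(p-1) - 1 = -(1/(p-1)) := by field_simp; ring
      rw [e1, e2]
      have hm : (r * w r) ^ (1/(p-1)) = r ^ (1/(p-1)) * w r ^ (1/(p-1)) :=
        Real.mul_rpow hr.le hwr.le
      have hinv : w r ^ (-(1/(p-1))) * w r ^ (1/(p-1)) = 1 := by
        rw [← Real.rpow_add hwr]; simp
      have hwinv : 0 < w r ^ (-(1/(p-1))) := Real.rpow_pos_of_pos hwr _
      have h4 := hineq r hr
      have h5 : w r ^ (-(1/(p-1))) * ((r * w r) ^ (1/(p-1)))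
          < w r ^ (-(1/(p-1))) * (-(deriv w r)) := (mul_lt_mul_iff_right₀ hwinv).mpr h4
      rw [hm] at h5
      have h6 : r ^ (1/(p-1)) < w r ^ (-(1/(p-1))) * (-(deriv w r)) := by
        calc r ^ (1/(p-1))
            = w r ^ (-(1/(p-1))) * (r ^ (1/(p-1)) * w r ^ (1/(p-1))) := by
              rw [show w r ^ (-(1/(p-1))) * (r ^ (1/(p-1)) * w r ^ (1/(p-1)))
                  = r ^ (1/(p-1)) * (w r ^ (-(1/(p-1))) * w r ^ (1/(p-1))) from by ring,
                hinv, mul_one]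
          _ < _ := h5
      have hc : p/(p-2) * ((p-2)/(p-1)) = p/(p-1) := by
        field_simp
      have hrw2 : (p/(p-2)) * (deriv w r * ((p-2)/(p-1)) * w r ^ (-(1/(p-1))))
          = p/(p-1) * (deriv w r * w r ^ (-(1/(p-1)))) := by
        field_simp
      rw [hrw2]
      have hp' : (0:ℝ) < p/(p-1) := by positivity
      nlinarith [mul_lt_mul_of_pos_left h6 hp']
    have hganti : StrictAntiOn
        (fun x : ℝ => x ^ (p/(p-1)) + (p/(p-2)) * w x ^ ((p-2)/(p-1))) (Set.Ici 1) := by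
      apply strictAntiOn_of_deriv_neg (convex_Ici 1)
      · intro x hx
        exact ((hgd x (lt_of_lt_of_le one_pos hx)).differentiableAt.continuousAt).continuousWithinAt
      · intro x hx
        rw [interior_Ici] at hx
        exact hgneg x (lt_trans one_pos hx)
    set R : ℝ := max 2 ((1:ℝ) ^ (p/(p-1)) + (p/(p-2)) * w 1 ^ ((p-2)/(p-1)) + 1) with hRdef
    have hR1 : (1:ℝ) < R := lt_of_lt_of_le one_lt_two (le_max_left _ _)
    have hlt : R ^ (p/(p-1)) + (p/(p-2)) * w R ^ ((p-2)/(p-1))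
        < (1:ℝ) ^ (p/(p-1)) + (p/(p-2)) * w 1 ^ ((p-2)/(p-1)) :=
      hganti (Set.mem_Ici.mpr le_rfl) (Set.mem_Ici.mpr hR1.le) hR1
    have hRlb : R ≤ R ^ (p/(p-1)) := by
      calc R = R ^ (1:ℝ) := (Real.rpow_one R).symm
        _ ≤ R ^ (p/(p-1)) := Real.rpow_le_rpow_of_exponent_le hR1.le
            (by rw [le_div_iff₀ hp1]; linarith)
    have hsecond : 0 ≤ (p/(p-2)) * w R ^ ((p-2)/(p-1)) :=
      mul_nonneg (by positivity) (Real.rpow_nonneg (hpos R (by linarith)).le _)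
    have hmax : (1:ℝ) ^ (p/(p-1)) + (p/(p-2)) * w 1 ^ ((p-2)/(p-1)) + 1 ≤ R :=
      le_max_right _ _
    linarith
  · -- at a first zero the derivative does not vanish
    intro ρ₁ hρ hwρ hposIco hder
    have hkey := key ρ₁ hρ (fun r hr hrρ => hposIco r ⟨hr.le, hrρ⟩)
    rw [hder, hwρ] at hkey
    simp [Real.zero_rpow hp2.ne'] at hkey
end

section
/- Let p>2, N≥1, γ=p/(p-2), p'=p/(p-1), ε=1, and α ≤ α* := -γ + γ(N+γ)/((p-1)(N+2γ)). Suppose (y,Y) is a nonconstant periodic solution of the system y' = -γy - |Y|^{(2-p)/(p-1)}Y, Y' = -(γ+N)Y + αy - |Y|^{(2-p)/(p-1)}Y with period P, lying in the quadrant {y>0, Y<0}, whose orbit is a stable (non-unstable) limit cycle, so that ∮(|Y|^{(2-p)/(p-1)}/(p-1) - 2γ - N)dτ ≤ 0. Then integrating α y' - γ Y' over the period and applying Jensen's and Hölder's inequalities yields γ(γ+N)(∮|Y|^{1/(p-1)}dτ)^{p-2} ≤ α+γ and 1 ≤ ((p-1)(2γ+N)/(γ(γ+N)))(α+γ), contradicting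 α ≤ α*. Hence no such cycle exists. -/
open Set Filter Real Topology

/-- Forward invariance of the positive quadrant for the cooperative linear system
`G' = -γ G + b H`, `H' = β G - c H`. -/
lemma aux_pos_on_Icc {γ β : ℝ} {G H b c : ℝ → ℝ} (hβ : 0 ≤ β)
    {a T C : ℝ} (hTa : a ≤ T)
    (hb : ∀ t ∈ Set.Icc a T, 0 ≤ b t)
    (hc : ∀ t ∈ Set.Icc a T, c t ≤ C)
    (hG : ∀ t, HasDerivAt G (-γ * G t + b t * H t) t)
    (hH : ∀ t, HasDerivAt H (β * G t - c t * H t) t)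
    (hGa : 0 < G a) (hHa : 0 < H a) :
    ∀ t ∈ Set.Icc a T, 0 < G t ∧ 0 < H t := by
  have cG : Continuous G := by
    rw [continuous_iff_continuousAt]; exact fun t => (hG t).differentiableAt.continuousAt
  have cH : Continuous H := by
    rw [continuous_iff_continuousAt]; exact fun t => (hH t).differentiableAt.continuousAt
  set Bad : Set ℝ := {t | t ∈ Set.Icc a T ∧ (G t ≤ 0 ∨ H t ≤ 0)} with hBad_def
  intro t ht
  by_contra hcon
  have htBad : t ∈ Bad := by
    refine ⟨ht, ?_⟩
    rcases not_and_or.1 hcon with h1 | h1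
    · exact Or.inl (le_of_not_gt h1)
    · exact Or.inr (le_of_not_gt h1)
  have hne : Bad.Nonempty := ⟨t, htBad⟩
  have hclosed : IsClosed Bad := by
    have : Bad = (Set.Icc a T) ∩ (G ⁻¹' Set.Iic 0 ∪ H ⁻¹' Set.Iic 0) := by
      ext s; simp [hBad_def, Set.mem_Icc, and_comm]
    rw [this]
    exact isClosed_Icc.inter ((isClosed_Iic.preimage cG).union (isClosed_Iic.preimage cH))
  have hbdd : BddBelow Bad := ⟨a, fun s hs => hs.1.1⟩
  set σ := sInf Bad with hσ_def
  have hσmem : σ ∈ Bad := hclosed.csInf_mem hne hbdd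
  have haσ : a ≤ σ := le_csInf hne (fun s hs => hs.1.1)
  have hσT : σ ≤ T := hσmem.1.2
  have haBad : a ∉ Bad := by
    rintro ⟨-, h1 | h1⟩ <;> linarith
  have haσ' : a < σ := lt_of_le_of_ne haσ (fun h => haBad (h ▸ hσmem))
  have before : ∀ s, s ∈ Set.Ico a σ → 0 < G s ∧ 0 < H s := by
    intro s hs
    have hsBad : s ∉ Bad := notMem_of_lt_csInf hs.2 hbdd
    have hsIcc : s ∈ Set.Icc a T := ⟨hs.1, le_trans hs.2.le hσT⟩
    by_contra hcc
    apply hsBad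
    refine ⟨hsIcc, ?_⟩
    rcases not_and_or.1 hcc with h1 | h1
    · exact Or.inl (le_of_not_gt h1)
    · exact Or.inr (le_of_not_gt h1)
  have nonneg : ∀ s, s ∈ Set.Icc a σ → 0 ≤ G s ∧ 0 ≤ H s := by
    intro s hs
    rcases lt_or_eq_of_le hs.2 with h1 | h1
    · have := before s ⟨hs.1, h1⟩; exact ⟨this.1.le, this.2.le⟩
    · rw [h1]
      have hmem : Set.Ico a σ ∈ 𝓝[<] σ := Ico_mem_nhdsLT haσ'
      have tG : Tendsto G (𝓝[<] σ) (𝓝 (G σ)) := (cG.tendsto σ).mono_left nhdsWithin_le_nhds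
      have tH : Tendsto H (𝓝[<] σ) (𝓝 (H σ)) := (cH.tendsto σ).mono_left nhdsWithin_le_nhds
      constructor
      · refine ge_of_tendsto tG ?_
        filter_upwards [hmem] with x hx using (before x hx).1.le
      · refine ge_of_tendsto tH ?_
        filter_upwards [hmem] with x hx using (before x hx).2.le
  -- G σ > 0 via monotonicity of exp(γ t) * G t
  have hGσ : 0 < G σ := by
    have hφ : ∀ s, HasDerivAt (fun r => Real.exp (γ * r) * G r)
        (Real.exp (γ * s) * (b s * H s)) s := by
      intro s
      have h1 : HasDerivAt (fun r => Real.exp (γ * r)) (γ * Real.exp (γ * s)) s := by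
        have := (Real.hasDerivAt_exp (γ * s)).comp s ((hasDerivAt_id s).const_mul γ)
        exact this.congr_deriv (by ring)
      have := h1.mul (hG s)
      exact this.congr_deriv (by ring)
    have hmono : MonotoneOn (fun r => Real.exp (γ * r) * G r) (Set.Icc a σ) := by
      apply monotoneOn_of_deriv_nonneg (convex_Icc a σ)
      · exact ((Real.continuous_exp.comp (continuous_const.mul continuous_id)).mul cG).continuousOn
      · intro x hx
        exact ((hφ x).differentiableAt).differentiableWithinAt
      · intro x hx
        rw [interior_Icc] at hx
        rw [(hφ x).deriv]
        have hxI : x ∈ Set.Icc a σ := ⟨hx.1.le, hx.2.le⟩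
        have hxI' : x ∈ Set.Icc a T := ⟨hx.1.le, le_trans hx.2.le hσT⟩
        exact mul_nonneg (Real.exp_pos _).le (mul_nonneg (hb x hxI') (nonneg x hxI).2)
    have h2 : Real.exp (γ * a) * G a ≤ Real.exp (γ * σ) * G σ :=
      hmono (Set.left_mem_Icc.2 haσ'.le) (Set.right_mem_Icc.2 haσ'.le) haσ'.le
    have h3 : (0:ℝ) < Real.exp (γ * a) * G a := mul_pos (Real.exp_pos _) hGa
    have h4 : (0:ℝ) < Real.exp (γ * σ) * G σ := lt_of_lt_of_le h3 h2
    nlinarith [Real.exp_pos (γ * σ), h4]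
  have hHσ : 0 < H σ := by
    have hψ : ∀ s, HasDerivAt (fun r => Real.exp (C * r) * H r)
        (Real.exp (C * s) * (β * G s + (C - c s) * H s)) s := by
      intro s
      have h1 : HasDerivAt (fun r => Real.exp (C * r)) (C * Real.exp (C * s)) s := by
        have := (Real.hasDerivAt_exp (C * s)).comp s ((hasDerivAt_id s).const_mul C)
        exact this.congr_deriv (by ring)
      have := h1.mul (hH s)
      exact this.congr_deriv (by ring)
    have hmono : MonotoneOn (fun r => Real.exp (C * r) * H r) (Set.Icc a σ) := by
      apply monotoneOn_of_deriv_nonneg (convex_Icc a σ)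
      · exact ((Real.continuous_exp.comp (continuous_const.mul continuous_id)).mul cH).continuousOn
      · intro x hx
        exact ((hψ x).differentiableAt).differentiableWithinAt
      · intro x hx
        rw [interior_Icc] at hx
        rw [(hψ x).deriv]
        have hxI : x ∈ Set.Icc a σ := ⟨hx.1.le, hx.2.le⟩
        have hxI' : x ∈ Set.Icc a T := ⟨hx.1.le, le_trans hx.2.le hσT⟩
        have h5 := nonneg x hxI
        have h6 := hc x hxI'
        have h7 : 0 ≤ β * G x + (C - c x) * H x :=
          add_nonneg (mul_nonneg hβ h5.1) (mul_nonneg (by linarith) h5.2)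
        exact mul_nonneg (Real.exp_pos _).le h7
    have h2 : Real.exp (C * a) * H a ≤ Real.exp (C * σ) * H σ :=
      hmono (Set.left_mem_Icc.2 haσ'.le) (Set.right_mem_Icc.2 haσ'.le) haσ'.le
    have h3 : (0:ℝ) < Real.exp (C * a) * H a := mul_pos (Real.exp_pos _) hHa
    have h4 : (0:ℝ) < Real.exp (C * σ) * H σ := lt_of_lt_of_le h3 h2
    nlinarith [Real.exp_pos (C * σ), h4]
  rcases hσmem.2 with h1 | h1 <;> linarith

/-- From a point with zero value and positive derivative, and a continuous positive
companion, find a nearby later point where both are positive. -/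
lemma aux_pos_soon {f h : ℝ → ℝ} {τ d : ℝ} (hf : HasDerivAt f d τ) (hf0 : f τ = 0)
    (hd : 0 < d) (hh : ContinuousAt h τ) (hh0 : 0 < h τ) :
    ∃ s, 0 < f s ∧ 0 < h s := by
  have hs : Tendsto (slope f τ) (𝓝[>] τ) (𝓝 d) :=
    (hasDerivAt_iff_tendsto_slope.1 hf).mono_left
      (nhdsWithin_mono τ (fun x hx => ne_of_gt hx))
  have ev1 : ∀ᶠ s in 𝓝[>] τ, 0 < slope f τ s := hs.eventually (eventually_gt_nhds hd)
  have ev2 : ∀ᶠ s in 𝓝[>] τ, 0 < h s :=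
    (hh.eventually (eventually_gt_nhds hh0)).filter_mono nhdsWithin_le_nhds
  have ev3 : ∀ᶠ s in 𝓝[>] τ, τ < s := eventually_mem_nhdsWithin
  obtain ⟨s, ⟨⟨hs1, hs2⟩, h3⟩⟩ := ((ev1.and ev2).and ev3).exists
  refine ⟨s, ?_, hs2⟩
  have := hs1
  rw [slope_def_field, hf0, sub_zero] at this
  have h4 : 0 < s - τ := by linarith
  have := mul_pos this h4
  rw [div_mul_cancel₀] at this
  · exact this
  · exact ne_of_gt h4

/-- A Grönwall-based uniqueness lemma: a vector function whose derivative is linearly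
bounded by its norm on compacts and vanishing at one point vanishes everywhere. -/
lemma aux_zero_everywhere {f f' : ℝ → ℝ × ℝ}
    (hf : ∀ t, HasDerivAt f (f' t) t)
    (hK : ∀ a T : ℝ, a ≤ T → ∃ K : ℝ, ∀ t ∈ Set.Icc a T, ‖f' t‖ ≤ K * ‖f t‖)
    {τ₀ : ℝ} (h0 : f τ₀ = 0) : ∀ t, f t = 0 := by
  have forward : ∀ (g g' : ℝ → ℝ × ℝ), (∀ t, HasDerivAt g (g' t) t) →
      (∀ a T : ℝ, a ≤ T → ∃ K : ℝ, ∀ t ∈ Set.Icc a T, ‖g' t‖ ≤ K * ‖g t‖) →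
      ∀ (a : ℝ), g a = 0 → ∀ t, a ≤ t → g t = 0 := by
    intro g g' hg hKg a h0a t hat
    obtain ⟨K, hKb⟩ := hKg a t hat
    have cg : ContinuousOn g (Set.Icc a t) := by
      apply Continuous.continuousOn
      rw [continuous_iff_continuousAt]; exact fun s => (hg s).differentiableAt.continuousAt
    have key := norm_le_gronwallBound_of_norm_deriv_right_le (δ := 0) (K := K) (ε := 0)
      cg (fun x _ => (hg x).hasDerivWithinAt)
      (by simp [h0a]) (fun x hx => by
        simpa using hKb x (Set.Ico_subset_Icc_self hx))
    have := key t (Set.right_mem_Icc.2 hat)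
    rw [gronwallBound_ε0_δ0] at this
    exact norm_le_zero_iff.1 this
  intro t
  rcases le_total τ₀ t with hle | hle
  · exact forward f f' hf hK τ₀ h0 t hle
  · -- time reversal
    set F : ℝ → ℝ × ℝ := fun s => f (2 * τ₀ - s) with hF_def
    set F' : ℝ → ℝ × ℝ := fun s => (-1 : ℝ) • f' (2 * τ₀ - s) with hF'_def
    have hF : ∀ s, HasDerivAt F (F' s) s := by
      intro s
      have hσ : HasDerivAt (fun r : ℝ => 2 * τ₀ - r) (-1) s := by
        exact ((hasDerivAt_const s (2 * τ₀)).sub (hasDerivAt_id s)).congr_deriv (by ring)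
      have := HasDerivAt.scomp (𝕜 := ℝ) (𝕜' := ℝ) s (hf (2 * τ₀ - s)) hσ
      exact this
    have hKF : ∀ a T : ℝ, a ≤ T → ∃ K : ℝ, ∀ s ∈ Set.Icc a T, ‖F' s‖ ≤ K * ‖F s‖ := by
      intro a T haT
      obtain ⟨K, hKb⟩ := hK (2 * τ₀ - T) (2 * τ₀ - a) (by linarith)
      refine ⟨K, fun s hs => ?_⟩
      have : 2 * τ₀ - s ∈ Set.Icc (2 * τ₀ - T) (2 * τ₀ - a) :=
        ⟨by linarith [hs.2], by linarith [hs.1]⟩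
      have h2 := hKb _ this
      simpa [hF_def, hF'_def, norm_smul] using h2
    have hF0 : F τ₀ = 0 := by simp [hF_def, show 2 * τ₀ - τ₀ = τ₀ by ring, h0]
    have := forward F F' hF hKF τ₀ hF0 (2 * τ₀ - t) (by linarith)
    simpa [hF_def, show 2 * τ₀ - (2 * τ₀ - t) = t by ring] using this

/-- Main auxiliary result: a cooperative planar system `y' = g`, `g' = -γ g + b h`,
`h' = β g - c h` with `β ≥ 0`, `b > 0` admits no nonconstant periodic first coordinate. -/
lemma aux_main (γq β P : ℝ) (hβ : 0 ≤ β) (hP : 0 < P)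
    (y g h b c : ℝ → ℝ)
    (hyper : ∀ τ, y (τ + P) = y τ)
    (hbpos : ∀ τ, 0 < b τ)
    (hbcont : Continuous b) (hccont : Continuous c)
    (hdy : ∀ τ, HasDerivAt y (g τ) τ)
    (hdg : ∀ τ, HasDerivAt g (-γq * g τ + b τ * h τ) τ)
    (hdh : ∀ τ, HasDerivAt h (β * g τ - c τ * h τ) τ)
    (hnc : ∃ τ₁ τ₂, y τ₁ ≠ y τ₂) : False := by
  have cy : Continuous y := by
    rw [continuous_iff_continuousAt]; exact fun t => (hdy t).differentiableAt.continuousAt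
  have cg : Continuous g := by
    rw [continuous_iff_continuousAt]; exact fun t => (hdg t).differentiableAt.continuousAt
  have ch : Continuous h := by
    rw [continuous_iff_continuousAt]; exact fun t => (hdh t).differentiableAt.continuousAt
  -- a nonconstant periodic function has an interior extremum, where g = 0
  have hτ₀ : ∃ τ₀, g τ₀ = 0 := by
    obtain ⟨a₁, ha₁, hmax⟩ := isCompact_Icc.exists_isMaxOn
      (Set.nonempty_Icc.2 (by linarith : (0:ℝ) ≤ P)) cy.continuousOn
    obtain ⟨a₂, ha₂, hmin⟩ := isCompact_Icc.exists_isMinOn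
      (Set.nonempty_Icc.2 (by linarith : (0:ℝ) ≤ P)) cy.continuousOn
    have hMm : y a₂ < y a₁ := by
      obtain ⟨τ₁, τ₂, hne⟩ := hnc
      obtain ⟨s₁, hs₁, he₁⟩ := Function.Periodic.exists_mem_Ico₀ hyper hP τ₁
      obtain ⟨s₂, hs₂, he₂⟩ := Function.Periodic.exists_mem_Ico₀ hyper hP τ₂
      have l1 : y s₁ ≤ y a₁ := hmax (Set.Ico_subset_Icc_self hs₁)
      have l2 : y s₂ ≤ y a₁ := hmax (Set.Ico_subset_Icc_self hs₂)
      have l3 : y a₂ ≤ y s₁ := hmin (Set.Ico_subset_Icc_self hs₁)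
      have l4 : y a₂ ≤ y s₂ := hmin (Set.Ico_subset_Icc_self hs₂)
      rw [he₁, he₂] at hne
      rcases lt_or_gt_of_ne hne with hlt | hlt <;> linarith
    have hyP0 : y P = y 0 := hyper 0 ▸ by norm_num
    by_cases hin : a₁ ∈ Set.Ioo 0 P
    · refine ⟨a₁, ?_⟩
      have hloc : IsLocalMax y a₁ := by
        have hmem : Set.Icc 0 P ∈ 𝓝 a₁ := Icc_mem_nhds hin.1 hin.2
        filter_upwards [hmem] with x hx using hmax hx
      exact hloc.hasDerivAt_eq_zero (hdy a₁)
    · have hend : y a₁ = y 0 := by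
        obtain ⟨h1, h2⟩ := ha₁
        rcases eq_or_lt_of_le h1 with h4 | h4
        · rw [← h4]
        · rcases eq_or_lt_of_le h2 with h5 | h5
          · rw [h5, hyP0]
          · exact absurd ⟨h4, h5⟩ hin
      have ha₂in : a₂ ∈ Set.Ioo 0 P := by
        by_contra hnot
        have hend2 : y a₂ = y 0 := by
          rcases ha₂ with ⟨h1, h2⟩
          rcases eq_or_lt_of_le h1 with h4 | h4
          · rw [← h4]
          · rcases eq_or_lt_of_le h2 with h5 | h5
            · rw [h5, hyP0]
            · exact absurd ⟨h4, h5⟩ hnot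
        rw [hend2, hend] at hMm
        exact lt_irrefl _ hMm
      refine ⟨a₂, ?_⟩
      have hloc : IsLocalMin y a₂ := by
        have hmem : Set.Icc 0 P ∈ 𝓝 a₂ := Icc_mem_nhds ha₂in.1 ha₂in.2
        filter_upwards [hmem] with x hx using hmin hx
      exact hloc.hasDerivAt_eq_zero (hdy a₂)
  obtain ⟨τ₀, hg0⟩ := hτ₀
  -- helper: from a point where both g and h are (strictly) positive, contradiction
  have posCase : ∀ s : ℝ, 0 < g s → 0 < h s → False := by
    intro s hgs hhs
    obtain ⟨xc, -, hxc⟩ := isCompact_Icc.exists_isMaxOn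
      (Set.nonempty_Icc.2 (by linarith : s ≤ s + P)) hccont.continuousOn
    have hposIcc := aux_pos_on_Icc (γ := γq) (C := c xc) hβ
      (by linarith : s ≤ s + P) (fun t _ => (hbpos t).le) (fun t ht => hxc ht)
      hdg hdh hgs hhs
    have hmono : StrictMonoOn y (Set.Icc s (s + P)) := by
      apply strictMonoOn_of_deriv_pos (convex_Icc _ _) cy.continuousOn
      intro x hx
      rw [interior_Icc] at hx
      rw [(hdy x).deriv]
      exact (hposIcc x ⟨hx.1.le, hx.2.le⟩).1
    have := hmono (Set.left_mem_Icc.2 (by linarith)) (Set.right_mem_Icc.2 (by linarith))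
      (by linarith : s < s + P)
    rw [hyper s] at this
    exact lt_irrefl _ this
  have negCase : ∀ s : ℝ, g s < 0 → h s < 0 → False := by
    intro s hgs hhs
    obtain ⟨xc, -, hxc⟩ := isCompact_Icc.exists_isMaxOn
      (Set.nonempty_Icc.2 (by linarith : s ≤ s + P)) hccont.continuousOn
    have hdG : ∀ t, HasDerivAt (fun τ => -g τ)
        (-γq * (fun τ => -g τ) t + b t * ((fun τ => -h τ) t)) t := by
      intro t
      have := (hdg t).neg
      exact this.congr_deriv (by beta_reduce; ring)
    have hdH : ∀ t, HasDerivAt (fun τ => -h τ)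
        (β * ((fun τ => -g τ) t) - c t * ((fun τ => -h τ) t)) t := by
      intro t
      have := (hdh t).neg
      exact this.congr_deriv (by beta_reduce; ring)
    have hposIcc := aux_pos_on_Icc (γ := γq) (C := c xc) hβ
      (by linarith : s ≤ s + P) (fun t _ => (hbpos t).le) (fun t ht => hxc ht)
      hdG hdH (by simpa using hgs) (by simpa using hhs)
    have hmono : StrictAntiOn y (Set.Icc s (s + P)) := by
      apply strictAntiOn_of_deriv_neg (convex_Icc _ _) cy.continuousOn
      intro x hx
      rw [interior_Icc] at hx
      rw [(hdy x).deriv]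
      have := (hposIcc x ⟨hx.1.le, hx.2.le⟩).1
      beta_reduce at this
      linarith
    have := hmono (Set.left_mem_Icc.2 (by linarith)) (Set.right_mem_Icc.2 (by linarith))
      (by linarith : s < s + P)
    rw [hyper s] at this
    exact lt_irrefl _ this
  rcases lt_trichotomy (h τ₀) 0 with hh0 | hh0 | hh0
  · -- h τ₀ < 0 : soon both negative
    obtain ⟨s, hs1, hs2⟩ := aux_pos_soon (f := fun τ => -g τ) (h := fun τ => -h τ)
      (d := -(-γq * g τ₀ + b τ₀ * h τ₀)) ((hdg τ₀).neg)
      (by simp [hg0]) (by rw [hg0]; nlinarith [hbpos τ₀])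
      (ch.neg.continuousAt) (by simpa using hh0)
    exact negCase s (by simpa using hs1) (by simpa using hs2)
  · -- h τ₀ = 0 : Grönwall, y is constant
    have hf : ∀ t, HasDerivAt (fun τ => (g τ, h τ))
        ((fun τ => (-γq * g τ + b τ * h τ, β * g τ - c τ * h τ)) t) t := by
      intro t
      exact (hdg t).prodMk (hdh t)
    have hK : ∀ a T : ℝ, a ≤ T → ∃ K : ℝ, ∀ t ∈ Set.Icc a T,
        ‖(fun τ => (-γq * g τ + b τ * h τ, β * g τ - c τ * h τ)) t‖
          ≤ K * ‖(fun τ => (g τ, h τ)) t‖ := by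
      intro a T haT
      obtain ⟨xb, -, hxb⟩ := isCompact_Icc.exists_isMaxOn
        (Set.nonempty_Icc.2 haT) hbcont.continuousOn
      obtain ⟨xc, -, hxc⟩ := isCompact_Icc.exists_isMaxOn
        (Set.nonempty_Icc.2 haT) (continuous_abs.comp hccont).continuousOn
      refine ⟨|γq| + b xb + β + |c xc|, fun t ht => ?_⟩
      have hb1 : b t ≤ b xb := hxb ht
      have hc1 : |c t| ≤ |c xc| := hxc ht
      have hb0 : 0 < b t := hbpos t
      simp only [Prod.norm_def, Real.norm_eq_abs]
      have h1 : |g t| ≤ max |g t| |h t| := le_max_left _ _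
      have h2 : |h t| ≤ max |g t| |h t| := le_max_right _ _
      have h3 : (0:ℝ) ≤ max |g t| |h t| := le_trans (abs_nonneg _) h1
      apply max_le
      · calc |(-γq * g t + b t * h t)| ≤ |(-γq) * g t| + |b t * h t| := abs_add_le _ _
          _ = |γq| * |g t| + b t * |h t| := by
              rw [abs_mul, abs_mul, abs_neg, abs_of_pos hb0]
          _ ≤ (|γq| + b xb + β + |c xc|) * max |g t| |h t| := by
              nlinarith [abs_nonneg γq, abs_nonneg (c xc), h1, h2, h3, hβ,
                mul_le_mul_of_nonneg_left h1 (abs_nonneg γq),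
                mul_le_mul_of_nonneg_left h2 hb0.le]
      · calc |(β * g t - c t * h t)| ≤ |β * g t| + |c t * h t| := abs_sub _ _
          _ = β * |g t| + |c t| * |h t| := by rw [abs_mul, abs_mul, abs_of_nonneg hβ]
          _ ≤ (|γq| + b xb + β + |c xc|) * max |g t| |h t| := by
              nlinarith [abs_nonneg γq, abs_nonneg (c t), h1, h2, h3, hβ,
                mul_le_mul_of_nonneg_left h1 hβ,
                mul_le_mul_of_nonneg_left h2 (abs_nonneg (c t)), hb0, hb1,
                mul_le_mul_of_nonneg_right hc1 h3]
    have hzero := aux_zero_everywhere hf hK (τ₀ := τ₀) (by simp [hg0, hh0, Prod.ext_iff])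
    have hgzero : ∀ t, g t = 0 := by
      intro t
      have := hzero t
      exact (Prod.ext_iff.1 this).1
    obtain ⟨τ₁, τ₂, hne⟩ := hnc
    apply hne
    exact is_const_of_deriv_eq_zero (fun t => (hdy t).differentiableAt)
      (fun t => by rw [(hdy t).deriv]; exact hgzero t) τ₁ τ₂
  · -- h τ₀ > 0 : soon both positive
    obtain ⟨s, hs1, hs2⟩ := aux_pos_soon (f := g) (h := h)
      (d := -γq * g τ₀ + b τ₀ * h τ₀) (hdg τ₀)
      hg0 (by rw [hg0]; nlinarith [hbpos τ₀]) ch.continuousAt hh0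
    exact posCase s hs1 hs2

/-- For ε=1 and α ≤ α* = -γ + γ(N+γ)/((p-1)(N+2γ)), system (S) admits no
nonconstant periodic orbit in the quadrant {y>0, Y<0} with nonpositive mean
Floquet integral: assuming such a cycle exists leads to a contradiction. -/
theorem stmt18 (p N α γ : ℝ) (hp : 2 < p) (hN : 1 ≤ N)
    (hγ : γ = p / (p - 2))
    (hα : α ≤ -γ + γ * (N + γ) / ((p - 1) * (N + 2 * γ)))
    (y Y : ℝ → ℝ) (P : ℝ) (hP : 0 < P)
    (hper : ∀ τ : ℝ, y (τ + P) = y τ ∧ Y (τ + P) = Y τ)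
    (hQ4 : ∀ τ : ℝ, 0 < y τ ∧ Y τ < 0)
    (hnc : ∃ τ₁ τ₂ : ℝ, y τ₁ ≠ y τ₂)
    (hy : ∀ τ : ℝ, HasDerivAt y (-γ * y τ - |Y τ| ^ ((2 - p) / (p - 1)) * Y τ) τ)
    (hY : ∀ τ : ℝ, HasDerivAt Y
      (-(γ + N) * Y τ + (α * y τ - |Y τ| ^ ((2 - p) / (p - 1)) * Y τ)) τ)
    (hFloquet : (1 / P) *
      (∫ τ in (0:ℝ)..P, (|Y τ| ^ ((2 - p) / (p - 1)) / (p - 1) - 2 * γ - N)) ≤ 0) :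
    False := by
  have hp2 : (0:ℝ) < p - 2 := by linarith
  have hp1 : (0:ℝ) < p - 1 := by linarith
  have hγpos : 0 < γ := by rw [hγ]; exact div_pos (by linarith) hp2
  have hαneg : α ≤ 0 := by
    have hN2γ : (0:ℝ) < N + 2 * γ := by nlinarith
    have hden : (0:ℝ) < (p - 1) * (N + 2 * γ) := mul_pos hp1 hN2γ
    have hlt : γ * (N + γ) / ((p - 1) * (N + 2 * γ)) < γ := by
      rw [div_lt_iff₀ hden]
      nlinarith [mul_pos hγpos (mul_pos hp2 hN2γ), mul_pos hγpos hγpos]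
    linarith
  set q : ℝ := 1 / (p - 1) with hq_def
  have hqpos : 0 < q := by rw [hq_def]; exact one_div_pos.2 hp1
  have hvpos : ∀ τ, (0:ℝ) < -Y τ := fun τ => neg_pos.2 (hQ4 τ).2
  have key : ∀ τ, |Y τ| ^ ((2 - p) / (p - 1)) * Y τ = -((-Y τ) ^ q) := by
    intro τ
    have h1 : |Y τ| = -Y τ := abs_of_neg (hQ4 τ).2
    have h3 : (2 - p) / (p - 1) + 1 = q := by
      rw [hq_def]; field_simp
      try norm_num
      try ring
    calc |Y τ| ^ ((2 - p) / (p - 1)) * Y τ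
        = (-Y τ) ^ ((2 - p) / (p - 1)) * -(-Y τ) := by rw [h1, neg_neg]
      _ = -((-Y τ) ^ ((2 - p) / (p - 1)) * (-Y τ) ^ (1:ℝ)) := by
          rw [Real.rpow_one]; ring
      _ = -((-Y τ) ^ ((2 - p) / (p - 1) + 1)) := by rw [← Real.rpow_add (hvpos τ)]
      _ = -((-Y τ) ^ q) := by rw [h3]
  have hdy : ∀ τ, HasDerivAt y (-γ * y τ + (-Y τ) ^ q) τ := by
    intro τ
    have h1 := hy τ
    rw [key τ] at h1
    convert h1 using 1
    ring
  have hdv : ∀ τ, HasDerivAt (fun τ => -Y τ)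
      (-(γ + N) * (-Y τ) - α * y τ - (-Y τ) ^ q) τ := by
    intro τ
    have h1 := (hY τ).neg
    rw [key τ] at h1
    exact h1.congr_deriv (by ring)
  have hdu : ∀ τ, HasDerivAt (fun τ => (-Y τ) ^ q)
      ((q * (-Y τ) ^ (q - 1)) * (-(γ + N) * (-Y τ) - α * y τ - (-Y τ) ^ q)) τ := by
    intro τ
    have h1 := (hdv τ).rpow_const (p := q) (Or.inl (ne_of_gt (hvpos τ)))
    convert h1 using 1
    ring
  have hdg : ∀ τ, HasDerivAt (fun τ => -γ * y τ + (-Y τ) ^ q)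
      (-γ * (-γ * y τ + (-Y τ) ^ q)
        + (q * (-Y τ) ^ (q - 1)) * (-(γ + N) * (-Y τ) - α * y τ - (-Y τ) ^ q)) τ := by
    intro τ
    exact ((hdy τ).const_mul (-γ)).add (hdu τ)
  have hdh : ∀ τ, HasDerivAt (fun τ => -(γ + N) * (-Y τ) - α * y τ - (-Y τ) ^ q)
      ((-α) * (-γ * y τ + (-Y τ) ^ q)
        - ((γ + N) + q * (-Y τ) ^ (q - 1))
          * (-(γ + N) * (-Y τ) - α * y τ - (-Y τ) ^ q)) τ := by
    intro τ
    have h1 := (((hdv τ).const_mul (-(γ + N))).sub ((hdy τ).const_mul α)).sub (hdu τ)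
    exact h1.congr_deriv (by ring)
  have hYc : Continuous Y := by
    rw [continuous_iff_continuousAt]; exact fun t => (hY t).differentiableAt.continuousAt
  have hbcont : Continuous (fun τ => q * (-Y τ) ^ (q - 1)) :=
    continuous_const.mul ((hYc.neg).rpow_const (fun τ => Or.inl (ne_of_gt (hvpos τ))))
  have hccont : Continuous (fun τ => (γ + N) + q * (-Y τ) ^ (q - 1)) :=
    continuous_const.add hbcont
  exact aux_main γ (-α) P (by linarith) hP y
    (fun τ => -γ * y τ + (-Y τ) ^ q)
    (fun τ => -(γ + N) * (-Y τ) - α * y τ - (-Y τ) ^ q)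
    (fun τ => q * (-Y τ) ^ (q - 1))
    (fun τ => (γ + N) + q * (-Y τ) ^ (q - 1))
    (fun τ => (hper τ).1)
    (fun τ => mul_pos hqpos (Real.rpow_pos_of_pos (hvpos τ) _))
    hbcont hccont hdy hdg hdh hnc
end

section
/- Let p>2, N≥1, ε=±1, α≠0, and let w be a solution of equation (E_w) on (0,r₀) with w(0⁺)=a≠0 and w'(0⁺)=0 (regular solution), where w and |w'|^{p-2}w' are C^1 up to 0. Then lim_{r→0} |w'(r)|^{p-2}w'(r)/(r w(r)) = -εα/N. -/
/-- For a regular solution of (E_w) with w(0⁺)=a≠0, w'(0⁺)=0, one has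
lim_{r→0⁺} |w'|^{p-2}w'/(r w) = -εα/N. -/
theorem stmt19 (p N ε α a r₀ : ℝ) (hp : 2 < p) (hN : 1 ≤ N)
    (hε : ε = 1 ∨ ε = -1) (hα0 : α ≠ 0) (hr₀ : 0 < r₀)
    (w : ℝ → ℝ) (ha : a ≠ 0)
    (hcont : ContinuousOn w (Set.Ico 0 r₀)) (hw0 : w 0 = a)
    (hd0 : Filter.Tendsto (deriv w) (nhdsWithin 0 (Set.Ioi 0)) (nhds 0))
    (hw1 : ∀ r ∈ Set.Ioo 0 r₀, DifferentiableAt ℝ w r)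
    (hw2 : ∀ r ∈ Set.Ioo 0 r₀,
      DifferentiableAt ℝ (fun s => |deriv w s| ^ (p - 2) * deriv w s) r)
    (heq : ∀ r ∈ Set.Ioo 0 r₀, Ew p N ε α w r) :
    Filter.Tendsto (fun r => (|deriv w r| ^ (p - 2) * deriv w r) / (r * w r))
      (nhdsWithin 0 (Set.Ioi 0)) (nhds (-(ε * α) / N)) := by
  have hN0 : (0:ℝ) < N := lt_of_lt_of_le one_pos hN
  set v : ℝ → ℝ := fun s => |deriv w s| ^ (p - 2) * deriv w s with hv
  -- w tends to a from the right
  have hwa : Filter.Tendsto w (nhdsWithin 0 (Set.Ioi 0)) (nhds a) := by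
    have h1 : nhdsWithin (0:ℝ) (Set.Ioo 0 r₀) = nhdsWithin 0 (Set.Ioi 0) :=
      nhdsWithin_Ioo_eq_nhdsGT hr₀
    have h2 : Filter.Tendsto w (nhdsWithin 0 (Set.Ico 0 r₀)) (nhds a) := by
      have := hcont 0 (Set.left_mem_Ico.mpr hr₀)
      rw [ContinuousWithinAt, hw0] at this
      exact this
    rw [← h1]
    exact h2.mono_left (nhdsWithin_mono _ Set.Ioo_subset_Ico_self)
  -- v tends to 0
  have hv0 : Filter.Tendsto v (nhdsWithin 0 (Set.Ioi 0)) (nhds 0) := by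
    have hc : ContinuousAt (fun x : ℝ => |x| ^ (p - 2) * x) 0 := by
      have h1 : ContinuousAt (fun x : ℝ => x ^ (p - 2)) (|(0:ℝ)|) :=
        Real.continuousAt_rpow_const _ _ (Or.inr (by linarith))
      exact (h1.comp (continuous_abs.continuousAt)).mul continuousAt_id
    have := hc.tendsto.comp hd0
    simpa [Real.zero_rpow (by linarith : p - 2 ≠ 0), Function.comp_def, hv] using this
  -- auxiliary functions for L'Hôpital
  set f : ℝ → ℝ := fun r => r ^ (N - 1) * v r with hf
  set g : ℝ → ℝ := fun r => r ^ N with hg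
  set F : ℝ → ℝ := fun r => -ε * r ^ (N - 1) * (r * deriv w r + α * w r) with hF
  set G : ℝ → ℝ := fun r => N * r ^ (N - 1) with hG
  have hff' : ∀ x ∈ Set.Ioo (0:ℝ) r₀, HasDerivAt f (F x) x := by
    intro x hx
    have hx0 : (0:ℝ) < x := hx.1
    have hpow : HasDerivAt (fun r : ℝ => r ^ (N - 1)) ((N - 1) * x ^ (N - 1 - 1)) x :=
      Real.hasDerivAt_rpow_const (Or.inl hx0.ne')
    have hvd : HasDerivAt v (deriv v x) x := (hw2 x hx).hasDerivAt
    have hmul := hpow.mul hvd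
    have heqx := heq x hx
    unfold Ew at heqx
    have hdv : deriv v x = -((N - 1) / x) * v x - ε * (x * deriv w x + α * w x) := by
      simp only [hv]
      linarith [heqx]
    rw [hdv] at hmul
    refine hmul.congr_deriv ?_
    have hsub : x ^ (N - 1 - 1) = x ^ (N - 1) / x := by
      rw [show N - 1 - 1 = (N - 1) - 1 from rfl, Real.rpow_sub hx0, Real.rpow_one]
    rw [hsub]
    field_simp
    ring
  have hgg' : ∀ x ∈ Set.Ioo (0:ℝ) r₀, HasDerivAt g (G x) x := by
    intro x hx
    exact Real.hasDerivAt_rpow_const (p := N) (Or.inl hx.1.ne')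
  have hg' : ∀ x ∈ Set.Ioo (0:ℝ) r₀, G x ≠ 0 := by
    intro x hx
    exact mul_ne_zero hN0.ne' (Real.rpow_pos_of_pos hx.1 _).ne'
  -- f tends to 0
  have hfa : Filter.Tendsto f (nhdsWithin 0 (Set.Ioi 0)) (nhds 0) := by
    have hb : ∀ᶠ r in nhdsWithin (0:ℝ) (Set.Ioi 0), ‖f r‖ ≤ |v r| := by
      filter_upwards [self_mem_nhdsWithin,
        Ioo_mem_nhdsGT_of_mem (Set.mem_Ico.mpr ⟨le_refl (0:ℝ), one_pos⟩)] with r hr hr1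
      have hr0 : (0:ℝ) < r := hr
      have h1 : r ^ (N - 1) ≤ 1 :=
        Real.rpow_le_one hr0.le hr1.2.le (by linarith)
      have h2 : (0:ℝ) ≤ r ^ (N - 1) := (Real.rpow_pos_of_pos hr0 _).le
      calc ‖f r‖ = r ^ (N - 1) * |v r| := by
            simp [hf, abs_mul, abs_of_nonneg h2]
        _ ≤ 1 * |v r| := by
            exact mul_le_mul_of_nonneg_right h1 (abs_nonneg _)
        _ = |v r| := one_mul _
    exact squeeze_zero_norm' hb (by simpa using hv0.abs)
  -- g tends to 0
  have hga : Filter.Tendsto g (nhdsWithin 0 (Set.Ioi 0)) (nhds 0) := by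
    have hc : ContinuousAt (fun x : ℝ => x ^ N) 0 :=
      Real.continuousAt_rpow_const _ _ (Or.inr hN0.le)
    have := hc.tendsto.mono_left (nhdsWithin_le_nhds (s := Set.Ioi (0:ℝ)))
    simpa [Real.zero_rpow hN0.ne'] using this
  -- F/G tends to -ε*α*a/N
  have hid : Filter.Tendsto (fun r : ℝ => r) (nhdsWithin 0 (Set.Ioi 0)) (nhds 0) :=
    Filter.tendsto_id.mono_left nhdsWithin_le_nhds
  have hdiv : Filter.Tendsto (fun x => F x / G x) (nhdsWithin 0 (Set.Ioi 0))
      (nhds (-ε * (α * a) / N)) := by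
    have hlim : Filter.Tendsto (fun r => -ε * (r * deriv w r + α * w r) / N)
        (nhdsWithin 0 (Set.Ioi 0)) (nhds (-ε * (α * a) / N)) := by
      have := (((hid.mul hd0).add (hwa.const_mul α)).const_mul (-ε)).div_const N
      simpa using this
    apply hlim.congr'
    filter_upwards [self_mem_nhdsWithin] with r hr
    have hr0 : (0:ℝ) < r := hr
    have hp0 : r ^ (N - 1) ≠ 0 := (Real.rpow_pos_of_pos hr0 _).ne'
    rw [hF, hG]
    field_simp
  have hmain : Filter.Tendsto (fun x => f x / g x) (nhdsWithin 0 (Set.Ioi 0))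
      (nhds (-ε * (α * a) / N)) :=
    HasDerivAt.lhopital_zero_right_on_Ioo hr₀ hff' hgg' hg' hfa hga hdiv
  -- finally divide by w
  have hfinal := hmain.div hwa ha
  have : (-ε * (α * a) / N) / a = -(ε * α) / N := by
    field_simp
  rw [this] at hfinal
  apply hfinal.congr'
  filter_upwards [self_mem_nhdsWithin] with r hr
  have hr0 : (0:ℝ) < r := hr
  have hp0 : r ^ (N - 1) ≠ 0 := (Real.rpow_pos_of_pos hr0 _).ne'
  have h1 : r ^ ((N - 1) + 1) = r ^ (N - 1) * r := Real.rpow_add_one hr0.ne' _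
  have hrN : r ^ N = r ^ (N - 1) * r := by
    rw [← h1]; congr 1; ring
  simp only [Pi.div_apply]
  show f r / g r / w r = _
  simp only [hf, hg]
  rw [hrN, mul_div_mul_left _ _ hp0, div_div]
end
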